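/- Let R be a von Neumann regular ring and a, b ∈ R with aba = a and bab = b, and set e = ba, f = ab. If eR and fR are perspective in the lattice of principal right ideals of R, then there exists a unit u of R with aua = a. -/

import Mathlib

/-- A principal right ideal of `R`, viewed as a submodule of `R` over `Rᵐᵒᵖ`. -/
def IsPrincipalRightIdeal {R : Type*} [Ring R] (I : Submodule Rᵐᵒᵖ R) : Prop :=
  ∃ g : R, I = Submodule.span Rᵐᵒᵖ ({g} : Set R)

open MulOpposite Submodule

/-- Let `R` be a von Neumann regular ring, `a, b ∈ R` with
`aba = a`, `bab = b`, `e = ba`, `f = ab`. If `eR` and `fR` are perspective in the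
lattice of principal right ideals then there is a unit `u` of `R` with `aua = a`. -/
theorem stmt18 {R : Type*} [Ring R] (hreg : ∀ a : R, ∃ x, a * x * a = a)
    (a b : R) (hab : a * b * a = a) (hba : b * a * b = b)
    (hpersp : ∃ C : Submodule Rᵐᵒᵖ R, IsPrincipalRightIdeal C ∧
      IsCompl (Submodule.span Rᵐᵒᵖ ({b * a} : Set R)) C ∧
      IsCompl (Submodule.span Rᵐᵒᵖ ({a * b} : Set R)) C) :
    ∃ u : Rˣ, a * ↑u * a = a := by
  obtain ⟨C, _, hE, hF⟩ := hpersp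
  set E := Submodule.span Rᵐᵒᵖ ({b * a} : Set R) with hEdef
  set F := Submodule.span Rᵐᵒᵖ ({a * b} : Set R) with hFdef
  have memF : ∀ x : R, x ∈ F ↔ ∃ r : R, a * b * r = x := by
    intro x
    rw [hFdef, Submodule.mem_span_singleton]
    constructor
    · rintro ⟨c, rfl⟩; exact ⟨c.unop, by simp [MulOpposite.smul_eq_mul_unop]⟩
    · rintro ⟨r, rfl⟩; exact ⟨op r, by simp [MulOpposite.smul_eq_mul_unop]⟩
  have memE : ∀ x : R, x ∈ E ↔ ∃ r : R, b * a * r = x := by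
    intro x
    rw [hEdef, Submodule.mem_span_singleton]
    constructor
    · rintro ⟨c, rfl⟩; exact ⟨c.unop, by simp [MulOpposite.smul_eq_mul_unop]⟩
    · rintro ⟨r, rfl⟩; exact ⟨op r, by simp [MulOpposite.smul_eq_mul_unop]⟩
  have hbF : ∀ x ∈ F, b * x ∈ E := by
    intro x hx
    obtain ⟨r, rfl⟩ := (memF x).1 hx
    exact (memE _).2 ⟨b * r, by noncomm_ring⟩
  have haE : ∀ y ∈ E, a * y ∈ F := by
    intro y hy
    obtain ⟨r, rfl⟩ := (memE y).1 hy
    exact (memF _).2 ⟨a * r, by noncomm_ring⟩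
  have habx : ∀ x ∈ F, a * (b * x) = x := by
    intro x hx
    obtain ⟨r, rfl⟩ := (memF x).1 hx
    calc a * (b * (a * b * r)) = (a * b * a) * (b * r) := by noncomm_ring
    _ = a * b * r := by rw [hab]; noncomm_ring
  have hbay : ∀ y ∈ E, b * (a * y) = y := by
    intro y hy
    obtain ⟨r, rfl⟩ := (memE y).1 hy
    calc b * (a * (b * a * r)) = (b * a * b) * (a * r) := by noncomm_ring
    _ = b * a * r := by rw [hba]; noncomm_ring
  let φ : F ≃ₗ[Rᵐᵒᵖ] E :=
    { toFun := fun x => ⟨b * x, hbF x x.2⟩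
      map_add' := fun x y => by ext; simp [mul_add]
      map_smul' := fun r x => by ext; simp [MulOpposite.smul_eq_mul_unop, mul_assoc]
      invFun := fun y => ⟨a * y, haE y y.2⟩
      left_inv := fun x => Subtype.ext (habx x x.2)
      right_inv := fun y => Subtype.ext (hbay y y.2) }
  let ψ : R ≃ₗ[Rᵐᵒᵖ] R :=
    (Submodule.prodEquivOfIsCompl F C hF).symm.trans
      ((φ.prodCongr (LinearEquiv.refl Rᵐᵒᵖ C)).trans (Submodule.prodEquivOfIsCompl E C hE))
  have key : ∀ x : R, ψ x = ψ 1 * x := by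
    intro x
    have : ψ (op x • (1 : R)) = op x • ψ 1 := map_smul ψ (op x) 1
    simpa [MulOpposite.smul_eq_mul_unop] using this
  have keysymm : ∀ x : R, ψ.symm x = ψ.symm 1 * x := by
    intro x
    have : ψ.symm (op x • (1 : R)) = op x • ψ.symm 1 := map_smul ψ.symm (op x) 1
    simpa [MulOpposite.smul_eq_mul_unop] using this
  have haF : a ∈ F := (memF a).2 ⟨a, hab⟩
  have hψa : ψ a = b * a := by
    have h1 : (Submodule.prodEquivOfIsCompl F C hF) (⟨a, haF⟩, 0) = a := by
      simp [Submodule.coe_prodEquivOfIsCompl']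
    have h2 : ψ ((Submodule.prodEquivOfIsCompl F C hF) (⟨a, haF⟩, 0)) =
        (Submodule.prodEquivOfIsCompl E C hE) (φ ⟨a, haF⟩, 0) := by
      simp only [ψ, LinearEquiv.trans_apply, LinearEquiv.symm_apply_apply]
      simp [LinearEquiv.prodCongr_apply]
    rw [h1] at h2
    rw [h2]
    simp [Submodule.coe_prodEquivOfIsCompl', φ]
  have hvw : ψ 1 * ψ.symm 1 = 1 := by
    have := key (ψ.symm 1)
    rw [LinearEquiv.apply_symm_apply] at this
    exact this.symm
  have hwv : ψ.symm 1 * ψ 1 = 1 := by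
    have := keysymm (ψ 1)
    rw [LinearEquiv.symm_apply_apply] at this
    exact this.symm
  refine ⟨⟨ψ 1, ψ.symm 1, hvw, hwv⟩, ?_⟩
  show a * ψ 1 * a = a
  calc a * ψ 1 * a = a * (ψ 1 * a) := by rw [mul_assoc]
  _ = a * ψ a := by rw [← key]
  _ = a * (b * a) := by rw [hψa]
  _ = a := by rw [← mul_assoc, hab]
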